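/- For every i = 1, …, r and every v ∈ V one has δ(u_i(v)) = f_i(v), where u_i = (r/(2|T|_c))·D_c∘f_i and |T|_c = c(s_ℓ)|T_ℓ| + c(s_p)|T_p| is assumed nonzero. -/

import Mathlib

open scoped TensorProduct
noncomputable section

abbrev Vc (r : ℕ) := Fin r → ℂ
abbrev Pc (r : ℕ) := MvPolynomial (Fin r) ℂ
abbrev Ec (r : ℕ) := ExteriorAlgebra ℂ (Vc r)
abbrev Wc (r : ℕ) := Ec r ⊗[ℂ] Pc r

variable {r : ℕ}

/-- The standard symmetric bilinear form on `ℂ^r`. -/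
def bil (x y : Vc r) : ℂ := ∑ i, x i * y i

/-- A vector of `ℂ^r` viewed as a degree-one polynomial. -/
def linP (v : Vc r) : Pc r := ∑ i, MvPolynomial.C (v i) * MvPolynomial.X i

/-- The action of a linear automorphism of `V` on polynomials (i.e. on `S(V)`). -/
def pAct (g : Vc r ≃ₗ[ℂ] Vc r) : Pc r →ₐ[ℂ] Pc r :=
  MvPolynomial.aeval fun i => linP (g (Pi.single i 1))

/-- The action of a linear automorphism of `V` on the exterior algebra of `V`. -/
def eAct (g : Vc r ≃ₗ[ℂ] Vc r) : Ec r →ₐ[ℂ] Ec r :=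
  ExteriorAlgebra.map (g : Vc r →ₗ[ℂ] Vc r)

/-- The diagonal action of a linear automorphism of `V` on the Weil algebra `⋀V ⊗ S(V)`. -/
def wAct (g : Vc r ≃ₗ[ℂ] Vc r) : Wc r →ₐ[ℂ] Wc r :=
  Algebra.TensorProduct.map (eAct g) (pAct g)

/-- A vector of `V` viewed inside the exterior algebra. -/
def exti (v : Vc r) : Ec r := ExteriorAlgebra.ι ℂ v

/-- The de Rham differential on the Weil algebra: `d(q ⊗ k) = ∑ᵢ (xᵢ ∧ q) ⊗ ∂k/∂xᵢ`. -/
def deRham : Wc r →ₗ[ℂ] Wc r :=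
  ∑ i, TensorProduct.map (LinearMap.mulLeft ℂ (exti (Pi.single i 1))) ((MvPolynomial.pderiv i).toLinearMap)

/-- The directional derivative `∂_v`. -/
def dirDeriv (v : Vc r) : Pc r →ₗ[ℂ] Pc r := ∑ i, v i • (MvPolynomial.pderiv i).toLinearMap

/-- `g` is a reflection with root `a`, with respect to the standard bilinear form. -/
def IsReflRoot (g : Vc r ≃ₗ[ℂ] Vc r) (a : Vc r) : Prop :=
  a ≠ 0 ∧ g a = -a ∧ ∀ v, bil a v = 0 → g v = v

/-- The relation whose associated two-sided ideal is `𝒲J`, the ideal generated by the `ψᵢ`. -/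
def relJ (ψ : Fin r → Pc r) : Wc r → Wc r → Prop :=
  fun x y => (∃ i, x = (1 : Ec r) ⊗ₜ[ℂ] ψ i) ∧ y = 0

/-- `B = ⋀V ⊗ H = 𝒲/𝒲J`. -/
abbrev Bc (ψ : Fin r → Pc r) := RingQuot (relJ ψ)

/-- The quotient map `π : 𝒲 → B`. -/
def πB (ψ : Fin r → Pc r) : Wc r →ₐ[ℂ] Bc ψ := RingQuot.mkAlgHom ℂ (relJ ψ)

/-- The Solomon elements `pᵢ = π(d(1 ⊗ ψᵢ))`. -/
def pSol (ψ : Fin r → Pc r) (i : Fin r) : Bc ψ := πB ψ (deRham ((1 : Ec r) ⊗ₜ[ℂ] ψ i))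

/-- The covariants `fᵢ(v) = π(1 ⊗ ∂_v ψᵢ)`. -/
def fcov (ψ : Fin r → Pc r) (i : Fin r) (v : Vc r) : Bc ψ :=
  πB ψ ((1 : Ec r) ⊗ₜ[ℂ] dirDeriv v (ψ i))

/-- The `B`-valued pairing `E(φ, χ) = ∑ᵢ φ(xᵢ)·χ(xᵢ)` on maps `V → B`. -/
def Eform (ψ : Fin r → Pc r) (φ χ : Vc r → Bc ψ) : Bc ψ :=
  ∑ i, φ (Pi.single i 1) * χ (Pi.single i 1)


/-- The covariants `uᵢ = (r/(2|T|))·D∘fᵢ`, where `D` (given here as the operator `DB` on `B`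
induced by `D = ∑_{s ∈ T} ∇ₛ`) is the Dunkl differential with `c = 1`. -/
def ucov (ψ : Fin r → Pc r) (T : Finset (Vc r ≃ₗ[ℂ] Vc r)) (DB : Bc ψ →ₗ[ℂ] Bc ψ)
    (i : Fin r) (v : Vc r) : Bc ψ :=
  ((r : ℂ) / (2 * T.card)) • DB (fcov ψ i v)



section Aux
open MvPolynomial

variable {r : ℕ}

lemma bil_single_right (v : Vc r) (j : Fin r) : bil v (Pi.single j 1) = v j := by
  simp [bil, Pi.single_apply, Finset.sum_ite_eq]

lemma bil_comm (x y : Vc r) : bil x y = bil y x := by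
  simp [bil, mul_comm]

lemma bil_smul_right (t : ℂ) (x y : Vc r) : bil x (t • y) = t * bil x y := by
  simp [bil, Finset.mul_sum, mul_comm, mul_left_comm]

lemma bil_sub_right (x y z : Vc r) : bil x (y - z) = bil x y - bil x z := by
  simp [bil, mul_sub, Finset.sum_sub_distrib]

lemma linP_single (j : Fin r) : linP (Pi.single j 1 : Vc r) = MvPolynomial.X j := by
  simp [linP, Pi.single_apply, apply_ite, Finset.sum_ite_eq]

lemma linP_smul (t : ℂ) (v : Vc r) : linP (t • v) = t • linP v := by
  simp [linP, Finset.smul_sum, MvPolynomial.smul_eq_C_mul, mul_assoc]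

lemma linP_sub (u v : Vc r) : linP (u - v) = linP u - linP v := by
  simp [linP, sub_mul, Finset.sum_sub_distrib]

lemma linP_eq_sum (v : Vc r) : linP v = ∑ i, v i • (MvPolynomial.X i : Pc r) := by
  simp [linP, MvPolynomial.smul_eq_C_mul]

lemma linP_ne_zero {v : Vc r} (hv : v ≠ 0) : linP v ≠ 0 := by
  obtain ⟨j, hj⟩ : ∃ j, v j ≠ 0 := by
    by_contra h
    push_neg at h
    exact hv (funext h)
  intro h
  have := congrArg (MvPolynomial.coeff (Finsupp.single j 1)) h
  simp [linP, MvPolynomial.coeff_sum, MvPolynomial.coeff_C_mul, MvPolynomial.coeff_X',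
    Finsupp.single_left_inj, Finset.sum_ite_eq] at this
  exact hj this

end Aux
section Aux2
open MvPolynomial

variable {r : ℕ}

lemma dirDeriv_apply (v : Vc r) (q : Pc r) :
    dirDeriv v q = ∑ i, v i • MvPolynomial.pderiv i q := by
  simp [dirDeriv, LinearMap.sum_apply]

lemma dirDeriv_C (v : Vc r) (a : ℂ) : dirDeriv v (MvPolynomial.C a) = 0 := by
  simp [dirDeriv_apply]

lemma dirDeriv_X (v : Vc r) (j : Fin r) : dirDeriv v (MvPolynomial.X j) = MvPolynomial.C (v j) := by
  simp [dirDeriv_apply, MvPolynomial.pderiv_X, Pi.single_apply, apply_ite,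
    MvPolynomial.smul_eq_C_mul, Finset.sum_ite_eq]

lemma dirDeriv_mul (v : Vc r) (p q : Pc r) :
    dirDeriv v (p * q) = dirDeriv v p * q + p * dirDeriv v q := by
  simp only [dirDeriv_apply, MvPolynomial.pderiv_mul, smul_add, Finset.sum_add_distrib,
    Finset.sum_mul, Finset.mul_sum, smul_mul_assoc, mul_smul_comm]

lemma dirDeriv_linP (v w : Vc r) : dirDeriv v (linP w) = MvPolynomial.C (bil v w) := by
  rw [linP_eq_sum, map_sum, bil]
  simp only [map_smul, dirDeriv_X]
  rw [map_sum]
  congr 1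
  ext i
  rw [MvPolynomial.smul_eq_C_mul, ← map_mul, mul_comm]

lemma dirDeriv_add_vec (u w : Vc r) : dirDeriv (u + w) = dirDeriv u + dirDeriv w := by
  simp [dirDeriv, add_smul, Finset.sum_add_distrib]

lemma dirDeriv_smul_vec (t : ℂ) (u : Vc r) : dirDeriv (t • u) = t • dirDeriv u := by
  simp [dirDeriv, mul_smul, Finset.smul_sum]

lemma pAct_X (g : Vc r ≃ₗ[ℂ] Vc r) (j : Fin r) :
    pAct g (MvPolynomial.X j) = linP (g (Pi.single j 1)) := by
  simp [pAct]

lemma pAct_C (g : Vc r ≃ₗ[ℂ] Vc r) (a : ℂ) :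
    pAct g (MvPolynomial.C a) = MvPolynomial.C a := by
  simp [pAct, MvPolynomial.algHom_C]

/-- Chain rule. -/
lemma dirDeriv_pAct (g : Vc r ≃ₗ[ℂ] Vc r) (v : Vc r) (q : Pc r) :
    dirDeriv v (pAct g q) = pAct g (dirDeriv (fun j => bil v (g (Pi.single j 1))) q) := by
  induction q using MvPolynomial.induction_on with
  | C a => rw [pAct_C, dirDeriv_C, dirDeriv_C, map_zero]
  | add p q hp hq => rw [map_add, map_add, hp, hq, map_add, map_add]
  | mul_X p j hp =>
      rw [map_mul, pAct_X, dirDeriv_mul, dirDeriv_mul, dirDeriv_linP, dirDeriv_X,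
        map_add, map_mul, map_mul, pAct_X, pAct_C, hp]

end Aux2

section Aux2b
variable {r : ℕ}

lemma dirDeriv_zero_vec : dirDeriv (0 : Vc r) = 0 := by
  simp [dirDeriv]

lemma dirDeriv_finset_sum {ι : Type*} [DecidableEq ι] (S : Finset ι) (f : ι → Vc r) (co : ι → ℂ) (q : Pc r) :
    dirDeriv (∑ s ∈ S, co s • f s) q = ∑ s ∈ S, co s • dirDeriv (f s) q := by
  induction S using Finset.induction with
  | empty => simp [dirDeriv_zero_vec]
  | insert a s hnot ih =>
      rw [Finset.sum_insert hnot, Finset.sum_insert hnot, dirDeriv_add_vec, dirDeriv_smul_vec,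
        LinearMap.add_apply, LinearMap.smul_apply, ih]
end Aux2b
section Aux3
open MvPolynomial

variable {r : ℕ}

lemma bil_self_ne_zero {s : Vc r ≃ₗ[ℂ] Vc r} {a : Vc r} (h : IsReflRoot s a) :
    bil a a ≠ 0 := by
  obtain ⟨ha, hsa, hfix⟩ := h
  intro h0
  have := hfix a h0
  rw [hsa] at this
  apply ha
  have h2 : a + a = 0 := by nth_rewrite 1 [← this]; simp
  have h3 : (2 : ℂ) • a = 0 := by rw [two_smul]; exact h2
  simpa using h3

/-- The reflection formula. -/
lemma refl_formula {s : Vc r ≃ₗ[ℂ] Vc r} {a : Vc r} (h : IsReflRoot s a) (v : Vc r) :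
    s v = v - (2 * bil a v / bil a a) • a := by
  obtain ⟨ha, hsa, hfix⟩ := h
  have hba := bil_self_ne_zero ⟨ha, hsa, hfix⟩
  set t : ℂ := bil a v / bil a a with ht
  have hw : bil a (v - t • a) = 0 := by
    rw [bil_sub_right, bil_smul_right, ht]
    field_simp
    ring
  have hfw := hfix _ hw
  have : s v = s (t • a) + s (v - t • a) := by
    rw [← map_add]; congr 1; abel
  rw [this, hfw, map_smul, hsa]
  have : (2 * bil a v / bil a a) = 2 * t := by rw [ht]; ring
  rw [this, smul_neg, two_mul, add_smul]
  abel

set_option maxHeartbeats 800000 in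
/-- `q - pAct s q` is divisible by `linP a` for a reflection `s` with root `a`. -/
lemma sub_pAct_dvd {s : Vc r ≃ₗ[ℂ] Vc r} {a : Vc r} (h : IsReflRoot s a) (q : Pc r) :
    ∃ m : Pc r, q - pAct s q = linP a * m := by
  have key : ∀ p : Pc r, Ideal.Quotient.mk (Ideal.span {linP a}) (pAct s p)
      = Ideal.Quotient.mk (Ideal.span {linP a}) p := by
    intro p
    have : (Ideal.Quotient.mkₐ ℂ (Ideal.span {linP a})).comp (pAct s)
        = Ideal.Quotient.mkₐ ℂ (Ideal.span {linP a}) := by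
      apply MvPolynomial.algHom_ext
      intro j
      simp only [AlgHom.comp_apply, pAct_X, Ideal.Quotient.mkₐ_eq_mk]
      rw [refl_formula h, linP_sub, linP_single, linP_smul,
        MvPolynomial.smul_eq_C_mul, Ideal.Quotient.eq, sub_sub_cancel_left]
      exact neg_mem (Ideal.mul_mem_left _ _ (Ideal.subset_span rfl))
    have := congrArg (fun φ => φ p) this
    simpa using this
  have : q - pAct s q ∈ Ideal.span {linP a} := by
    rw [← Ideal.Quotient.eq]
    exact (key q).symm
  rw [Ideal.mem_span_singleton'] at this
  obtain ⟨m, hm⟩ := this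
  exact ⟨m, by rw [← hm, mul_comm]⟩

end Aux3
section Aux4

variable {r : ℕ}

lemma mul_oneTmul (p : Pc r) (x : Wc r) :
    ((1 : Ec r) ⊗ₜ[ℂ] p) * x = LinearMap.lTensor (Ec r) (LinearMap.mulLeft ℂ p) x := by
  induction x using TensorProduct.induction_on with
  | zero => simp
  | tmul e q => simp [Algebra.TensorProduct.tmul_mul_tmul]
  | add x y hx hy => rw [mul_add, hx, hy, map_add]

lemma mul_oneTmul_injective {p : Pc r} (hp : p ≠ 0) :
    Function.Injective fun x : Wc r => ((1 : Ec r) ⊗ₜ[ℂ] p) * x := by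
  have h1 : Function.Injective (LinearMap.mulLeft ℂ p) := by
    intro a b hab
    exact mul_left_cancel₀ hp hab
  have := Module.Flat.lTensor_preserves_injective_linearMap
    (M := Ec r) (LinearMap.mulLeft ℂ p) h1
  intro a b hab
  apply this
  simpa [← mul_oneTmul] using hab

lemma tmul_mul_tmul' (e : Ec r) (p q : Pc r) :
    ((e : Ec r) ⊗ₜ[ℂ] (1 : Pc r)) * ((1 : Ec r) ⊗ₜ[ℂ] q) = e ⊗ₜ[ℂ] q := by
  simp [Algebra.TensorProduct.tmul_mul_tmul]

end Aux4
section Aux5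

variable {r : ℕ}

lemma endo_scalar (W : Subgroup (Vc r ≃ₗ[ℂ] Vc r))
    (hWirr : ∀ p : Submodule ℂ (Vc r), (∀ g ∈ W, ∀ v ∈ p, g v ∈ p) → p = ⊥ ∨ p = ⊤)
    (z : Vc r →ₗ[ℂ] Vc r) (hr : 0 < r)
    (hcomm : ∀ w ∈ W, ∀ v, z (w v) = w (z v)) : ∃ μ : ℂ, ∀ v, z v = μ • v := by
  haveI : Nonempty (Fin r) := ⟨⟨0, hr⟩⟩
  haveI : Nontrivial (Vc r) := inferInstance
  obtain ⟨μ, hμ⟩ := Module.End.exists_eigenvalue (z : Module.End ℂ (Vc r))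
  refine ⟨μ, ?_⟩
  have hE : Module.End.eigenspace (z : Module.End ℂ (Vc r)) μ = ⊤ := by
    have hinv : ∀ g ∈ W, ∀ v ∈ Module.End.eigenspace (z : Module.End ℂ (Vc r)) μ,
        g v ∈ Module.End.eigenspace (z : Module.End ℂ (Vc r)) μ := by
      intro g hg v hv
      rw [Module.End.mem_eigenspace_iff] at hv ⊢
      rw [hcomm g hg v, hv, map_smul]
    rcases hWirr _ hinv with h | h
    · exact absurd h hμ
    · exact h
  intro v
  have : v ∈ Module.End.eigenspace (z : Module.End ℂ (Vc r)) μ := hE ▸ Submodule.mem_top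
  exact Module.End.mem_eigenspace_iff.mp this

end Aux5
set_option maxHeartbeats 2000000 in

/-- Proposition 3.4 of De Concini–Papi.
For every `i = 1, …, r` and every `v ∈ V` one has `δ(uᵢ(v)) = fᵢ(v)`, where
`uᵢ = (r/(2|T|_c))·D_c∘fᵢ` and `|T|_c = c(s_ℓ)|T_ℓ| + c(s_p)|T_p|` is assumed nonzero. -/
theorem statement12
    -- `W` is a finite irreducible reflection group on `V = ℂ^r` (complexified euclidean space),
    (W : Subgroup (Vc r ≃ₗ[ℂ] Vc r))
    (hWfin : Finite W)
    (hWorth : ∀ g ∈ W, ∀ x y, bil (g x) (g y) = bil x y)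
    (hWirr : ∀ p : Submodule ℂ (Vc r), (∀ g ∈ W, ∀ v ∈ p, g v ∈ p) → p = ⊥ ∨ p = ⊤)
    -- `T` is the set of reflections of `W`, generating `W`, with roots `α s`,
    (T : Finset (Vc r ≃ₗ[ℂ] Vc r))
    (hT : ∀ g, g ∈ T ↔ g ∈ W ∧ ∃ a, IsReflRoot g a)
    (hWgen : Subgroup.closure (T : Set _) = W)
    (α : (Vc r ≃ₗ[ℂ] Vc r) → Vc r)
    (hα : ∀ s ∈ T, IsReflRoot s (α s))
    -- `ψ₁, …, ψᵣ` are homogeneous generators of `A^W` of degrees `2 ≤ d₁ ≤ … ≤ d_r`,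
    (ψ : Fin r → Pc r) (d : Fin r → ℕ)
    (hψhom : ∀ i, (ψ i).IsHomogeneous (d i))
    (hd2 : ∀ i, 2 ≤ d i) (hdmono : Monotone d)
    (hψinv : ∀ i, ∀ g ∈ W, pAct g (ψ i) = ψ i)
    (hψgen : ∀ q : Pc r, (∀ g ∈ W, pAct g q = q) ↔ q ∈ Algebra.adjoin ℂ (Set.range ψ))
    (hψind : AlgebraicIndependent ℂ ψ)
    -- `nab s` is the operator `∇ₛ = (αₛ ⊗ 1)·(1−s)/αₛ` on the Weil algebra, characterized by
    -- `(1 ⊗ αₛ) · ∇ₛ(ω) = (αₛ ⊗ 1) · (ω − s·ω)` (multiplication by `1 ⊗ αₛ` is injective),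
    (nab : (Vc r ≃ₗ[ℂ] Vc r) → Wc r →ₗ[ℂ] Wc r)
    (hnab : ∀ s ∈ T, ∀ ω, ((1 : Ec r) ⊗ₜ[ℂ] linP (α s)) * nab s ω
        = ((exti (α s)) ⊗ₜ[ℂ] (1 : Pc r)) * (ω - wAct s ω))
    -- `Bact g` is the action of `g` on `B` induced by the action on the Weil algebra,
    (Bact : (Vc r ≃ₗ[ℂ] Vc r) → Bc ψ →ₐ[ℂ] Bc ψ)
    (hBact : ∀ g : Vc r ≃ₗ[ℂ] Vc r, ∀ ω : Wc r, Bact g (πB ψ ω) = πB ψ (wAct g ω))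
    -- `c : T → ℂ` is a function constant on conjugacy classes,
    (c : (Vc r ≃ₗ[ℂ] Vc r) → ℂ)
    (hc : ∀ s ∈ T, ∀ w ∈ W, c (w * s * w⁻¹) = c s)
    -- `DcB` is the operator on `B` induced by the Dunkl differential `D_c = ∑_{s∈T} c(s)·∇ₛ`,
    (DcB : Bc ψ →ₗ[ℂ] Bc ψ)
    (hDcB : ∀ ω : Wc r, DcB (πB ψ ω) = πB ψ (∑ s ∈ T, c s • nab s ω))
    -- `T` is the disjoint union of the two conjugacy classes `T_ℓ` and `T_p`
    -- with representatives `s_ℓ ∈ T_ℓ` and `s_p ∈ T_p`,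
    (Tl Tp : Finset (Vc r ≃ₗ[ℂ] Vc r))
    (hTsplit : ∀ s, s ∈ T ↔ s ∈ Tl ∨ s ∈ Tp) (hTdisj : Disjoint Tl Tp)
    (hTlconj : ∀ s ∈ Tl, ∀ w ∈ W, w * s * w⁻¹ ∈ Tl)
    (hTpconj : ∀ s ∈ Tp, ∀ w ∈ W, w * s * w⁻¹ ∈ Tp)
    (hTlclass : ∀ s ∈ Tl, ∀ s' ∈ Tl, ∃ w ∈ W, w * s * w⁻¹ = s')
    (hTpclass : ∀ s ∈ Tp, ∀ s' ∈ Tp, ∃ w ∈ W, w * s * w⁻¹ = s')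
    (sl sp : Vc r ≃ₗ[ℂ] Vc r) (hsl : sl ∈ Tl) (hsp : sp ∈ Tp)
    -- `δW` is the Koszul differential on the Weil algebra, the odd derivation with
    -- `δ(v ⊗ 1) = 1 ⊗ v` and `δ(1 ⊗ f) = 0`; `δB` is the induced operator on `B`,
    (δW : Wc r →ₗ[ℂ] Wc r)
    (hδ0 : ∀ k : Pc r, δW ((1 : Ec r) ⊗ₜ[ℂ] k) = 0)
    (hδ1 : ∀ (v : Vc r) (ω : Wc r),
      δW ((exti v ⊗ₜ[ℂ] (1 : Pc r)) * ω)
        = ((1 : Ec r) ⊗ₜ[ℂ] linP v) * ω - (exti v ⊗ₜ[ℂ] (1 : Pc r)) * δW ω)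
    (δB : Bc ψ →ₗ[ℂ] Bc ψ)
    (hδB : ∀ ω : Wc r, δB (πB ψ ω) = πB ψ (δW ω))
    -- `|T|_c = c(s_ℓ)|T_ℓ| + c(s_p)|T_p|` is nonzero:
    (hTc : c sl * Tl.card + c sp * Tp.card ≠ 0) :
    ∀ (i : Fin r) (v : Vc r),
      δB (((r : ℂ) / (2 * (c sl * Tl.card + c sp * Tp.card))) • DcB (fcov ψ i v))
        = fcov ψ i v := by

  intro i v
  classical
  have hr : 0 < r := i.pos
  have hrC : (r : ℂ) ≠ 0 := Nat.cast_ne_zero.mpr hr.ne'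
  set Tc : ℂ := c sl * Tl.card + c sp * Tp.card with hTcdef
  have hTW : ∀ s ∈ T, s ∈ W := fun s hs => ((hT s).mp hs).1
  have hTconj : ∀ s ∈ T, ∀ w ∈ W, w * s * w⁻¹ ∈ T := by
    intro s hs w hw
    rcases (hTsplit s).mp hs with h | h
    · exact (hTsplit _).mpr (Or.inl (hTlconj s h w hw))
    · exact (hTsplit _).mpr (Or.inr (hTpconj s h w hw))
  -- the central element `z = ∑ c s • s`
  set z : Vc r →ₗ[ℂ] Vc r := ∑ s ∈ T, c s • (s : Vc r →ₗ[ℂ] Vc r) with hzdef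
  have hzapp : ∀ u : Vc r, z u = ∑ s ∈ T, c s • s u := by
    intro u
    rw [hzdef]
    simp [LinearMap.sum_apply]
  have hcomm : ∀ w ∈ W, ∀ u : Vc r, z (w u) = w (z u) := by
    intro w hw u
    rw [hzapp, hzapp, map_sum]
    simp only [map_smul]
    refine Finset.sum_bij' (fun s _ => w⁻¹ * s * w) (fun s _ => w * s * w⁻¹) ?_ ?_ ?_ ?_ ?_
    · intro s hs
      have := hTconj s hs w⁻¹ (inv_mem hw)
      rwa [inv_inv] at this
    · intro s hs
      exact hTconj s hs w hw
    · intro s hs; group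
    · intro s hs; group
    · intro s hs
      have hcs : c (w⁻¹ * s * w) = c s := by
        have := hc s hs w⁻¹ (inv_mem hw)
        rwa [inv_inv] at this
      rw [hcs]
      congr 1
      show s (w u) = w ((w⁻¹ * s * w) u)
      show s (w u) = w (w⁻¹ (s (w u)))
      exact (w.apply_symm_apply _).symm
  obtain ⟨μ, hμ⟩ := endo_scalar W hWirr z hr hcomm
  -- the sum of `c` over `T`
  have hTunion : T = Tl ∪ Tp := Finset.ext fun s => by
    rw [hTsplit s, Finset.mem_union]
  have hX : ∑ s ∈ T, c s = Tc := by
    have h1 : ∀ s ∈ Tl, c s = c sl := by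
      intro s hs
      obtain ⟨w, hw, hws⟩ := hTlclass sl hsl s hs
      rw [← hws]
      exact hc sl ((hTsplit sl).mpr (Or.inl hsl)) w hw
    have h2 : ∀ s ∈ Tp, c s = c sp := by
      intro s hs
      obtain ⟨w, hw, hws⟩ := hTpclass sp hsp s hs
      rw [← hws]
      exact hc sp ((hTsplit sp).mpr (Or.inr hsp)) w hw
    rw [hTunion, Finset.sum_union hTdisj, Finset.sum_congr rfl h1, Finset.sum_congr rfl h2,
      Finset.sum_const, Finset.sum_const, hTcdef]
    simp [mul_comm]
  -- the trace computation
  have htrace : μ * r = Tc * ((r : ℂ) - 2) := by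
    have h1 : ∑ j, (z (Pi.single j 1)) j = μ * r := by
      have : ∀ j : Fin r, (z (Pi.single j 1)) j = μ := by
        intro j
        rw [hμ]
        simp
      rw [Finset.sum_congr rfl fun j _ => this j]
      simp [mul_comm]
    have hs2 : ∀ s ∈ T, ∑ j, (s (Pi.single j 1) : Vc r) j = (r : ℂ) - 2 := by
      intro s hs
      have ha := hα s hs
      have hba := bil_self_ne_zero ha
      have hterm : ∀ j : Fin r, (s (Pi.single j 1) : Vc r) j
          = 1 - 2 * (α s) j / bil (α s) (α s) * (α s) j := by
        intro j
        rw [refl_formula ha]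
        simp [bil_single_right]
      rw [Finset.sum_congr rfl fun j _ => hterm j, Finset.sum_sub_distrib]
      have hsq : ∑ j, 2 * (α s) j / bil (α s) (α s) * (α s) j = 2 := by
        have : ∀ j : Fin r, 2 * (α s) j / bil (α s) (α s) * (α s) j
            = (2 / bil (α s) (α s)) * ((α s) j * (α s) j) := by
          intro j; ring
        rw [Finset.sum_congr rfl fun j _ => this j, ← Finset.mul_sum]
        rw [show ∑ j, (α s) j * (α s) j = bil (α s) (α s) from rfl]
        field_simp
      rw [hsq]
      simp
    have h2 : ∑ j, (z (Pi.single j 1)) j = (∑ s ∈ T, c s) * ((r : ℂ) - 2) := by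
      have hj : ∀ j : Fin r, (z (Pi.single j 1)) j = ∑ s ∈ T, c s * (s (Pi.single j 1) : Vc r) j := by
        intro j
        rw [hzapp]
        simp [Finset.sum_apply]
      rw [Finset.sum_congr rfl fun j _ => hj j, Finset.sum_comm]
      rw [Finset.sum_congr rfl (fun s hs => ?_), Finset.sum_mul]
      rw [← Finset.mul_sum, hs2 s hs]
    rw [← h1, h2, hX]
  -- the polynomial `k = ∂_v ψ_i`
  set k : Pc r := dirDeriv v (ψ i) with hkdef
  have hpk : ∀ s ∈ T, pAct s k = dirDeriv (s v) (ψ i) := by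
    intro s hs
    have hchain := dirDeriv_pAct s (s v) (ψ i)
    rw [hψinv i s (hTW s hs)] at hchain
    have hvec : (fun j => bil (s v) (s (Pi.single j 1))) = v := by
      funext j
      rw [hWorth s (hTW s hs), bil_single_right]
    rw [hvec] at hchain
    rw [hkdef, ← hchain]
  choose m hm using fun s (hs : s ∈ T) => sub_pAct_dvd (hα s hs) k
  have hnabk : ∀ s (hs : s ∈ T), nab s ((1 : Ec r) ⊗ₜ[ℂ] k) = exti (α s) ⊗ₜ[ℂ] m s hs := by
    intro s hs
    apply mul_oneTmul_injective (linP_ne_zero (hα s hs).1)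
    simp only
    rw [hnab s hs]
    have hws : wAct s ((1 : Ec r) ⊗ₜ[ℂ] k) = (1 : Ec r) ⊗ₜ[ℂ] pAct s k := by
      simp [wAct, Algebra.TensorProduct.map_tmul, map_one]
    rw [hws, ← TensorProduct.tmul_sub, hm s hs, Algebra.TensorProduct.tmul_mul_tmul,
      Algebra.TensorProduct.tmul_mul_tmul, one_mul, mul_one, one_mul]
  have hδk : ∀ s (hs : s ∈ T),
      δW (nab s ((1 : Ec r) ⊗ₜ[ℂ] k)) = (1 : Ec r) ⊗ₜ[ℂ] (k - pAct s k) := by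
    intro s hs
    rw [hnabk s hs]
    have hsplit : (exti (α s)) ⊗ₜ[ℂ] (m s hs)
        = ((exti (α s)) ⊗ₜ[ℂ] (1 : Pc r)) * ((1 : Ec r) ⊗ₜ[ℂ] (m s hs)) := by
      rw [Algebra.TensorProduct.tmul_mul_tmul, mul_one, one_mul]
    rw [hsplit, hδ1, hδ0, mul_zero, sub_zero, Algebra.TensorProduct.tmul_mul_tmul, one_mul,
      ← hm s hs]
  -- the key sum
  have hsum : δW (∑ s ∈ T, c s • nab s ((1 : Ec r) ⊗ₜ[ℂ] k))
      = ((∑ s ∈ T, c s) - μ) • ((1 : Ec r) ⊗ₜ[ℂ] k) := by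
    rw [map_sum]
    have hterm : ∀ s ∈ T, δW (c s • nab s ((1 : Ec r) ⊗ₜ[ℂ] k))
        = (1 : Ec r) ⊗ₜ[ℂ] (c s • (k - pAct s k)) := by
      intro s hs
      rw [map_smul, hδk s hs, TensorProduct.tmul_smul]
    rw [Finset.sum_congr rfl hterm, ← TensorProduct.tmul_sum]
    have hinner : ∑ s ∈ T, c s • (k - pAct s k) = ((∑ s ∈ T, c s) - μ) • k := by
      have h1 : ∑ s ∈ T, c s • (k - pAct s k)
          = (∑ s ∈ T, c s) • k - ∑ s ∈ T, c s • pAct s k := by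
        rw [Finset.sum_congr rfl fun s _ => smul_sub (c s) k (pAct s k),
          Finset.sum_sub_distrib, Finset.sum_smul]
      have h2 : ∑ s ∈ T, c s • pAct s k = μ • k := by
        have : ∀ s ∈ T, c s • pAct s k = c s • dirDeriv (s v) (ψ i) := by
          intro s hs
          rw [hpk s hs]
        rw [Finset.sum_congr rfl this, ← dirDeriv_finset_sum T (fun s => s v) c (ψ i)]
        have hzv : ∑ s ∈ T, c s • (s v : Vc r) = μ • v := by
          rw [← hzapp, hμ]
        rw [hzv, dirDeriv_smul_vec, LinearMap.smul_apply, hkdef]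
      rw [h1, h2, sub_smul]
    rw [hinner, TensorProduct.tmul_smul]
  -- the scalar identity
  have hscal : (r : ℂ) / (2 * Tc) * ((∑ s ∈ T, c s) - μ) = 1 := by
    rw [hX]
    field_simp
    linear_combination -htrace
  -- assembling
  have hfcov : fcov ψ i v = πB ψ ((1 : Ec r) ⊗ₜ[ℂ] k) := rfl
  rw [hfcov, hDcB, map_smul, hδB, hsum, map_smul, smul_smul, hscal, one_smul]
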